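/- Let Γ be a good pointclass such that every subset of [ℕ]^ω belonging to Γ has the Ramsey property. Then no Hamel basis belongs to Γ. -/

import Mathlib

open Set

open Classical in
/-- The characteristic function of a set, viewed as a point of the Cantor space `α → Bool`. -/
noncomputable def chi {α : Type} (s : Set α) : α → Bool :=
  fun a => if a ∈ s then true else false
/-- A *good pointclass*: a collection of subsets of Polish spaces containing all clopen
sets and closed under countable intersections, countable unions, finite products,
continuous images, and continuous preimages. -/
structure GoodPointclass : Type 1 where
  mem : ∀ (X : Type) [TopologicalSpace X], Set (Set X)
  clopen_mem : ∀ (X : Type) [TopologicalSpace X] [PolishSpace X] (s : Set X),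
    IsClopen s → s ∈ mem X
  iInter_mem : ∀ (X : Type) [TopologicalSpace X] [PolishSpace X] (s : ℕ → Set X),
    (∀ n, s n ∈ mem X) → (⋂ n, s n) ∈ mem X
  iUnion_mem : ∀ (X : Type) [TopologicalSpace X] [PolishSpace X] (s : ℕ → Set X),
    (∀ n, s n ∈ mem X) → (⋃ n, s n) ∈ mem X
  prod_mem : ∀ (X Y : Type) [TopologicalSpace X] [PolishSpace X]
    [TopologicalSpace Y] [PolishSpace Y] (s : Set X) (t : Set Y),
    s ∈ mem X → t ∈ mem Y → s ×ˢ t ∈ mem (X × Y)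
  image_mem : ∀ (X Y : Type) [TopologicalSpace X] [PolishSpace X]
    [TopologicalSpace Y] [PolishSpace Y] (f : X → Y) (s : Set X),
    Continuous f → s ∈ mem X → f '' s ∈ mem Y
  preimage_mem : ∀ (X Y : Type) [TopologicalSpace X] [PolishSpace X]
    [TopologicalSpace Y] [PolishSpace Y] (f : X → Y) (t : Set Y),
    Continuous f → t ∈ mem Y → f ⁻¹' t ∈ mem X
/-- A set `X ⊆ [ℕ]^ω` has the Ramsey property: there is an infinite `H ⊆ ℕ` with
`[H]^ω ⊆ X` or `[H]^ω ∩ X = ∅`. -/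
def RamseyProp (X : Set (Set ℕ)) : Prop :=
  ∃ H : Set ℕ, H.Infinite ∧
    ((∀ y : Set ℕ, y.Infinite → y ⊆ H → y ∈ X) ∨
     (∀ y : Set ℕ, y.Infinite → y ⊆ H → y ∉ X))
/-- A Hamel basis: a basis of `ℝ` as a vector space over `ℚ`. -/
def IsHamelBasis (B : Set ℝ) : Prop :=
  LinearIndependent ℚ ((↑) : B → ℝ) ∧ Submodule.span ℚ B = ⊤


open Set


namespace NHB
noncomputable section

def w (n : ℕ) : ℝ := (1/2 : ℝ)^(n+1)
def wq (n : ℕ) : ℚ := (1/2 : ℚ)^(n+1)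

lemma wq_cast (n : ℕ) : ((wq n : ℚ) : ℝ) = w n := by
  unfold wq w; push_cast; ring

lemma w_pos (n : ℕ) : 0 < w n := by unfold w; positivity

lemma wq_ne_zero (n : ℕ) : wq n ≠ 0 := by
  intro h
  have := wq_cast n
  rw [h] at this
  exact absurd (this ▸ (w_pos n)) (by norm_num)

lemma w_strictAnti : StrictAnti w := by
  intro a b hab
  apply pow_lt_pow_right_of_lt_one₀ (by norm_num) (by norm_num)
  omega

lemma w_injective : Function.Injective w := w_strictAnti.injective

lemma wq_injective : Function.Injective wq := by
  intro a b hab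
  apply w_injective
  rw [← wq_cast, ← wq_cast, hab]

lemma summable_w : Summable w := by
  have h : Summable (fun n : ℕ => (1/2:ℝ)^n) := summable_geometric_of_lt_one (by norm_num) (by norm_num)
  exact (h.mul_right (1/2:ℝ)).congr (fun n => by simp [w]; rw [pow_succ, mul_inv]) 

lemma summable_ind (s : Set ℕ) : Summable (s.indicator w) := summable_w.indicator s

def Fs (s : Set ℕ) : ℝ := ∑' n, s.indicator w n

lemma Fs_union {s t : Set ℕ} (h : Disjoint s t) : Fs (s ∪ t) = Fs s + Fs t := by
  unfold Fs
  rw [← Summable.tsum_add (summable_ind s) (summable_ind t)]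
  congr 1
  exact Set.indicator_union_of_disjoint h w

lemma Fs_singleton (n : ℕ) : Fs {n} = w n := by
  unfold Fs
  have h : ∀ m, ({n} : Set ℕ).indicator w m = if m = n then w n else 0 := by
    intro m
    by_cases h : m = n
    · subst h; simp
    · simp [Set.indicator_apply, h]
  simp_rw [h]
  exact tsum_ite_eq n (fun _ => w n)

lemma Fs_pos {s : Set ℕ} (hs : s.Nonempty) : 0 < Fs s := by
  obtain ⟨n, hn⟩ := hs
  refine Summable.tsum_pos (summable_ind s) (fun i => Set.indicator_nonneg (fun m _ => (w_pos m).le) i) n ?_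
  simpa [Set.indicator_of_mem hn] using w_pos n

lemma tsum_tail (n : ℕ) : ∑' m, (Set.Ioi n).indicator w m = w n := by
  rw [← Summable.sum_add_tsum_nat_add (n+1) (summable_ind _)]
  have h1 : ∑ i ∈ Finset.range (n+1), (Set.Ioi n).indicator w i = 0 := by
    apply Finset.sum_eq_zero
    intro i hi
    have hi' : i ∉ Set.Ioi n := by simp at hi ⊢; omega
    simp [Set.indicator_of_notMem hi']
  have h2 : ∀ i : ℕ, (Set.Ioi n).indicator w (i + (n+1)) = w n * (1/2)^(i+1) := by
    intro i
    have hm : i + (n+1) ∈ Set.Ioi n := by simp; omega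
    rw [Set.indicator_of_mem hm]
    unfold w
    rw [← pow_add]
    ring_nf
  rw [h1, zero_add]
  simp_rw [h2]
  rw [tsum_mul_left]
  have h3 : ∑' (i:ℕ), (1/2 : ℝ)^(i+1) = 1 := by
    simp_rw [pow_succ]
    rw [tsum_mul_right, tsum_geometric_of_lt_one (by norm_num) (by norm_num)]
    norm_num
  rw [h3, mul_one]

lemma Fs_tail_le {t : Set ℕ} {n : ℕ} (h : t ⊆ Set.Ioi n) : Fs t ≤ w n := by
  rw [← tsum_tail n]
  exact Summable.tsum_le_tsum
    (fun i => Set.indicator_le_indicator_of_subset h (fun m => (w_pos m).le) i)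
    (summable_ind t) (summable_ind _)

lemma Fs_lt {s t : Set ℕ} {n : ℕ} (heq : s ∩ Set.Iio n = t ∩ Set.Iio n)
    (hns : n ∈ s) (hnt : n ∉ t) (hs' : (s ∩ Set.Ioi n).Nonempty) : Fs t < Fs s := by
  have hsdecomp : s = (s ∩ Set.Iio n) ∪ ({n} ∪ (s ∩ Set.Ioi n)) := by
    ext m
    simp only [Set.mem_union, Set.mem_inter_iff, Set.mem_Iio, Set.mem_Ioi, Set.mem_singleton_iff]
    constructor
    · intro hm
      rcases lt_trichotomy m n with h | h | h
      · exact Or.inl ⟨hm, h⟩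
      · exact Or.inr (Or.inl h)
      · exact Or.inr (Or.inr ⟨hm, h⟩)
    · rintro (⟨h1, _⟩ | h1 | ⟨h1, _⟩)
      · exact h1
      · exact h1 ▸ hns
      · exact h1
  have htdecomp : t = (t ∩ Set.Iio n) ∪ (t ∩ Set.Ioi n) := by
    ext m
    simp only [Set.mem_union, Set.mem_inter_iff, Set.mem_Iio, Set.mem_Ioi]
    constructor
    · intro hm
      rcases lt_trichotomy m n with h | h | h
      · exact Or.inl ⟨hm, h⟩
      · exact absurd (h ▸ hm) hnt
      · exact Or.inr ⟨hm, h⟩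
    · rintro (⟨h1, _⟩ | ⟨h1, _⟩) <;> exact h1
  have d1 : Disjoint (s ∩ Set.Iio n) ({n} ∪ (s ∩ Set.Ioi n)) := by
    rw [Set.disjoint_left]
    rintro m ⟨_, hm⟩ hm2
    simp only [Set.mem_union, Set.mem_inter_iff, Set.mem_Ioi, Set.mem_singleton_iff] at hm2
    simp only [Set.mem_Iio] at hm
    rcases hm2 with h1 | ⟨_, h1⟩ <;> omega
  have d2 : Disjoint ({n} : Set ℕ) (s ∩ Set.Ioi n) := by
    rw [Set.disjoint_left]
    rintro m hm1 ⟨_, hm2⟩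
    simp only [Set.mem_singleton_iff] at hm1
    simp only [Set.mem_Ioi] at hm2
    omega
  have d3 : Disjoint (t ∩ Set.Iio n) (t ∩ Set.Ioi n) := by
    rw [Set.disjoint_left]
    rintro m ⟨_, hm1⟩ ⟨_, hm2⟩
    simp only [Set.mem_Iio] at hm1
    simp only [Set.mem_Ioi] at hm2
    omega
  have hFs : Fs s = Fs (s ∩ Set.Iio n) + (w n + Fs (s ∩ Set.Ioi n)) := by
    conv_lhs => rw [hsdecomp]
    rw [Fs_union d1, Fs_union d2, Fs_singleton]
  have hFt : Fs t = Fs (t ∩ Set.Iio n) + Fs (t ∩ Set.Ioi n) := by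
    conv_lhs => rw [htdecomp]
    rw [Fs_union d3]
  rw [hFs, hFt, heq]
  have h1 : Fs (t ∩ Set.Ioi n) ≤ w n := Fs_tail_le Set.inter_subset_right
  have h2 : 0 < Fs (s ∩ Set.Ioi n) := Fs_pos hs'
  linarith

lemma Fs_inj {s t : Set ℕ} (hs : s.Infinite) (ht : t.Infinite) (h : Fs s = Fs t) : s = t := by
  classical
  by_contra hne
  have hdiff : ∃ m, ¬(m ∈ s ↔ m ∈ t) := by
    by_contra hc
    push_neg at hc
    exact hne (Set.ext fun m => (hc m))
  set n := Nat.find hdiff with hndef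
  have hn := Nat.find_spec hdiff
  have hmin : ∀ m, m < n → (m ∈ s ↔ m ∈ t) := fun m hm => of_not_not (Nat.find_min hdiff hm)
  have heq : s ∩ Set.Iio n = t ∩ Set.Iio n := by
    ext m
    simp only [Set.mem_inter_iff, Set.mem_Iio]
    exact ⟨fun ⟨h1, h2⟩ => ⟨(hmin m h2).1 h1, h2⟩, fun ⟨h1, h2⟩ => ⟨(hmin m h2).2 h1, h2⟩⟩
  by_cases hns : n ∈ s
  · have hnt : n ∉ t := fun hnt => hn ⟨fun _ => hnt, fun _ => hns⟩
    have hne' : (s ∩ Set.Ioi n).Nonempty := by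
      obtain ⟨b, hb, hbn⟩ := hs.exists_gt n
      exact ⟨b, hb, hbn⟩
    exact absurd h (Fs_lt heq hns hnt hne').ne'
  · have hnt : n ∈ t := by
      by_contra hnt
      exact hn ⟨fun h1 => absurd h1 hns, fun h1 => absurd h1 hnt⟩
    have hne' : (t ∩ Set.Ioi n).Nonempty := by
      obtain ⟨b, hb, hbn⟩ := ht.exists_gt n
      exact ⟨b, hb, hbn⟩
    exact absurd h (Fs_lt heq.symm hnt hns hne').ne

lemma Fs_insert {s : Set ℕ} {n : ℕ} (hn : n ∉ s) : Fs (insert n s) = w n + Fs s := by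
  rw [Set.insert_eq, Fs_union (Set.disjoint_singleton_left.mpr hn), Fs_singleton]

lemma Fs_finite_rat {s : Set ℕ} (h : s.Finite) : ∃ q : ℚ, Fs s = (q : ℝ) := by
  refine Set.Finite.induction_on _ h ⟨0, by simp [Fs]⟩ ?_
  rintro a t ha _ ⟨q, hq⟩
  exact ⟨wq a + q, by rw [Fs_insert ha, hq, ← wq_cast]; push_cast; ring⟩

end
end NHB


namespace NHB
noncomputable section

def FB (g : ℕ → Bool) : ℝ := ∑' n, (if g n then w n else 0)

lemma FB_chi (s : Set ℕ) : FB (chi s) = Fs s := by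
  unfold FB Fs
  congr 1; funext n
  by_cases h : n ∈ s <;> simp [chi, h, Set.indicator_apply]

lemma continuous_FB : Continuous FB := by
  refine continuous_tsum (u := w) ?_ summable_w ?_
  · intro n
    exact (continuous_of_discreteTopology (f := fun b : Bool => if b then w n else 0)).comp
      (continuous_apply n)
  · intro n g
    by_cases h : g n <;> simp [h, abs_of_pos (w_pos n), (w_pos n).le]

open Classical in
def shift (e : ℕ → ℕ) (g : ℕ → Bool) : ℕ → Bool :=
  fun n => if h : ∃ m, e m = n then g h.choose else false

lemma continuous_shift (e : ℕ → ℕ) : Continuous (shift e) := by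
  refine continuous_pi fun n => ?_
  classical
  by_cases h : ∃ m, e m = n
  · simp only [shift, dif_pos h]; exact continuous_apply _
  · simp only [shift, dif_neg h]; exact continuous_const

lemma chi_image {e : ℕ → ℕ} (he : Function.Injective e) (x : Set ℕ) :
    chi (e '' x) = shift e (chi x) := by
  classical
  funext n
  by_cases h : ∃ m, e m = n
  · have hch : e h.choose = n := h.choose_spec
    have hiff : n ∈ e '' x ↔ h.choose ∈ x := by
      constructor
      · rintro ⟨m, hm, hmn⟩
        have : m = h.choose := he (by rw [hmn, hch])
        exact this ▸ hm
      · intro hm; exact ⟨h.choose, hm, hch⟩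
    simp only [shift, dif_pos h, chi]
    by_cases hx : h.choose ∈ x
    · rw [if_pos (hiff.mpr hx), if_pos hx]
    · rw [if_neg (fun hmem => hx (hiff.mp hmem)), if_neg hx]
  · have hn : n ∉ e '' x := fun ⟨m, _, hmn⟩ => h ⟨m, hmn⟩
    simp only [shift, dif_neg h, chi, if_neg hn]

def InfB : Set (ℕ → Bool) := {g | {n | g n = true}.Infinite}

lemma infinite_iff_unbdd {S : Set ℕ} : S.Infinite ↔ ∀ n, ∃ m ∈ S, n < m := by
  constructor
  · exact fun h n => h.exists_gt n
  · intro h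
    by_contra hf
    rw [Set.not_infinite] at hf
    obtain ⟨N, hN⟩ := hf.bddAbove
    obtain ⟨m, hm, hNm⟩ := h N
    exact absurd (hN hm) (by omega)

lemma InfB_eq : InfB = ⋂ n, ⋃ m, (if n < m then {g : ℕ → Bool | g m = true} else ∅) := by
  ext g
  simp only [InfB, Set.mem_setOf_eq, Set.mem_iInter, Set.mem_iUnion]
  rw [infinite_iff_unbdd]
  constructor
  · intro h n
    obtain ⟨m, hm, hnm⟩ := h n
    exact ⟨m, by rw [if_pos hnm]; exact hm⟩
  · intro h n
    obtain ⟨m, hm⟩ := h n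
    by_cases hnm : n < m
    · rw [if_pos hnm] at hm; exact ⟨m, hm, hnm⟩
    · rw [if_neg hnm] at hm; exact absurd hm (Set.notMem_empty g)

variable (Γ : GoodPointclass)

instance polishNatBool : PolishSpace (ℕ → Bool) := by
  have h1 : TopologicalSpace.SeparableSpace (ℕ → Bool) := inferInstance
  have h2 : TopologicalSpace.IsCompletelyMetrizableSpace (ℕ → Bool) := inferInstance
  infer_instance

lemma mem_iUnion_q {X : Type} [TopologicalSpace X] [PolishSpace X] (s : ℚ → Set X)
    (h : ∀ q, s q ∈ Γ.mem X) : (⋃ q, s q) ∈ Γ.mem X := by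
  obtain ⟨f, hf⟩ := exists_surjective_nat ℚ
  have heq : (⋃ q, s q) = ⋃ n, s (f n) := (hf.iUnion_comp s).symm
  rw [heq]
  exact Γ.iUnion_mem X _ (fun n => h (f n))

lemma mem_inter {X : Type} [TopologicalSpace X] [PolishSpace X] {s t : Set X}
    (hs : s ∈ Γ.mem X) (ht : t ∈ Γ.mem X) : s ∩ t ∈ Γ.mem X := by
  have heq : s ∩ t = ⋂ n, (if n = 0 then s else t) := by
    ext x
    simp only [Set.mem_inter_iff, Set.mem_iInter]
    constructor
    · rintro ⟨h1, h2⟩ n; by_cases h : n = 0 <;> simp [h, h1, h2]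
    · intro h; exact ⟨by simpa using h 0, by simpa using h 1⟩
  rw [heq]
  exact Γ.iInter_mem X _ (fun n => by by_cases h : n = 0 <;> simp [h, hs, ht])

lemma InfB_mem : InfB ∈ Γ.mem (ℕ → Bool) := by
  rw [InfB_eq]
  apply Γ.iInter_mem
  intro n
  apply Γ.iUnion_mem
  intro m
  by_cases h : n < m
  · rw [if_pos h]
    have heq : {g : ℕ → Bool | g m = true} = (fun g : ℕ → Bool => g m) ⁻¹' {true} := rfl
    rw [heq]
    exact Γ.clopen_mem _ _ (IsClopen.preimage (isClopen_discrete {true}) (continuous_apply m))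
  · rw [if_neg h]
    exact Γ.clopen_mem _ _ isClopen_empty

def Dset (B : Set ℝ) : ℕ → Set ℝ
  | 0 => {(0:ℝ)}
  | (k+1) => ⋃ q : ℚ, (fun p : ℝ × ℝ => (q:ℝ) * p.1 + p.2) '' (B ×ˢ Dset B k)

lemma Dset_mem {B : Set ℝ} (hB : B ∈ Γ.mem ℝ) : ∀ k, Dset B k ∈ Γ.mem ℝ := by
  intro k
  induction k with
  | zero =>
      have heq : ({(0:ℝ)} : Set ℝ) = (fun _ : ℝ => (0:ℝ)) '' Set.univ := by
        rw [Set.image_univ, Set.range_const]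
      show ({(0:ℝ)} : Set ℝ) ∈ Γ.mem ℝ
      rw [heq]
      exact Γ.image_mem ℝ ℝ _ _ continuous_const (Γ.clopen_mem ℝ _ isClopen_univ)
  | succ k ih =>
      show (⋃ q : ℚ, (fun p : ℝ × ℝ => (q:ℝ) * p.1 + p.2) '' (B ×ˢ Dset B k)) ∈ Γ.mem ℝ
      apply mem_iUnion_q Γ
      intro q
      exact Γ.image_mem (ℝ × ℝ) ℝ _ _
        ((continuous_const.mul continuous_fst).add continuous_snd)
        (Γ.prod_mem ℝ ℝ _ _ hB ih)

end
end NHB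

namespace NHB
noncomputable section

def nu {B : Set ℝ} (bb : Module.Basis ↥B ℚ ℝ) (r : ℝ) : ℕ := (bb.repr r).support.card

lemma repr_coe {B : Set ℝ} (bb : Module.Basis ↥B ℚ ℝ) (hbb : ∀ i : ↥B, (bb i : ℝ) = i.val) (i : ↥B) :
    bb.repr i.val = Finsupp.single i 1 := by
  conv_lhs => rw [← hbb i]
  exact bb.repr_self i

lemma nu_zero {B : Set ℝ} (bb : Module.Basis ↥B ℚ ℝ) : nu bb 0 = 0 := by
  simp [nu]

lemma nu_le_of_mem_Dset {B : Set ℝ} (bb : Module.Basis ↥B ℚ ℝ)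
    (hbb : ∀ i : ↥B, (bb i : ℝ) = i.val) :
    ∀ k r, r ∈ Dset B k → nu bb r ≤ k := by
  intro k
  induction k with
  | zero =>
      intro r hr
      rw [show Dset B 0 = {(0:ℝ)} from rfl, Set.mem_singleton_iff] at hr
      subst hr
      simp [nu_zero]
  | succ k ih =>
      intro r hr
      rw [show Dset B (k+1) = ⋃ q : ℚ, (fun p : ℝ × ℝ => (q:ℝ) * p.1 + p.2) '' (B ×ˢ Dset B k)
        from rfl] at hr
      obtain ⟨q, hq⟩ := Set.mem_iUnion.mp hr
      obtain ⟨p, hp, hpe⟩ := hq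
      have hp1 : p.1 ∈ B := hp.1
      have hp2 : p.2 ∈ Dset B k := hp.2
      have h1 : bb.repr ((q:ℝ) * p.1) = Finsupp.single ⟨p.1, hp1⟩ q := by
        rw [← Rat.smul_def, map_smul, repr_coe bb hbb ⟨p.1, hp1⟩, Finsupp.smul_single,
          smul_eq_mul, mul_one]
      have hpe' : (q:ℝ) * p.1 + p.2 = r := hpe
      rw [nu, ← hpe', map_add]
      calc ((bb.repr ((q:ℝ) * p.1) + bb.repr p.2).support).card
          ≤ ((bb.repr ((q:ℝ) * p.1)).support ∪ (bb.repr p.2).support).card :=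
            Finset.card_le_card Finsupp.support_add
        _ ≤ (bb.repr ((q:ℝ) * p.1)).support.card + (bb.repr p.2).support.card :=
            Finset.card_union_le _ _
        _ ≤ 1 + k := by
            refine Nat.add_le_add ?_ (ih p.2 hp2)
            rw [h1]
            exact (Finset.card_le_card Finsupp.support_single_subset).trans (by simp)
        _ = k + 1 := by omega

lemma mem_Dset_of_nu {B : Set ℝ} (bb : Module.Basis ↥B ℚ ℝ)
    (hbb : ∀ i : ↥B, (bb i : ℝ) = i.val) :
    ∀ k r, nu bb r ≤ k → r ∈ Dset B k := by
  have hBne : B.Nonempty := by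
    have : Nonempty ↥B := bb.index_nonempty
    obtain ⟨i⟩ := this
    exact ⟨i.val, i.2⟩
  intro k
  induction k with
  | zero =>
      intro r hr
      have h0 : (bb.repr r).support = ∅ := Finset.card_eq_zero.mp (Nat.le_zero.mp hr)
      have : bb.repr r = 0 := Finsupp.support_eq_empty.mp h0
      have hr0 : r = 0 := by
        have := (LinearEquiv.map_eq_zero_iff bb.repr).mp this
        exact this
      rw [show Dset B 0 = {(0:ℝ)} from rfl]
      simp [hr0]
  | succ k ih =>
      intro r hr
      rw [show Dset B (k+1) = ⋃ q : ℚ, (fun p : ℝ × ℝ => (q:ℝ) * p.1 + p.2) '' (B ×ˢ Dset B k)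
        from rfl]
      by_cases h0 : (bb.repr r).support = ∅
      · have hr0 : r = 0 :=
          (LinearEquiv.map_eq_zero_iff bb.repr).mp (Finsupp.support_eq_empty.mp h0)
        obtain ⟨b, hb⟩ := hBne
        refine Set.mem_iUnion.mpr ⟨0, ⟨(b, 0), Set.mem_prod.mpr ⟨hb, ih 0 (by simp [nu_zero])⟩, ?_⟩⟩
        simp [hr0]
      · obtain ⟨i, hi⟩ := Finset.nonempty_iff_ne_empty.mpr h0
        set q := bb.repr r i with hqdef
        set r' := r - (q:ℝ) * i.val with hr'def
        have hrepr' : bb.repr r' = Finsupp.erase i (bb.repr r) := by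
          rw [Finsupp.erase_eq_sub_single, hr'def, map_sub]
          congr 1
          rw [← Rat.smul_def, map_smul, repr_coe bb hbb i, Finsupp.smul_single,
            smul_eq_mul, mul_one]
        have hcard : nu bb r' ≤ k := by
          rw [nu, hrepr', Finsupp.support_erase, Finset.card_erase_of_mem hi]
          have h2 : (bb.repr r).support.card ≤ k + 1 := hr
          omega
        refine Set.mem_iUnion.mpr ⟨q, ⟨(i.val, r'), Set.mem_prod.mpr ⟨i.2, ih r' hcard⟩, ?_⟩⟩
        show (q:ℝ) * i.val + r' = r
        rw [hr'def]; ring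

lemma relRamsey (Γ : GoodPointclass)
    (hRamsey : ∀ X : Set (Set ℕ), (∀ x ∈ X, x.Infinite) →
      chi '' X ∈ Γ.mem (ℕ → Bool) → RamseyProp X)
    {B : Set ℝ} (bb : Module.Basis ↥B ℚ ℝ) (hbb : ∀ i : ↥B, (bb i : ℝ) = i.val)
    (hB : B ∈ Γ.mem ℝ) {K : Set ℕ} (hK : K.Infinite) (k : ℕ) :
    ∃ K', K' ⊆ K ∧ K'.Infinite ∧
      ((∀ y : Set ℕ, y.Infinite → y ⊆ K' → nu bb (Fs y) ≤ k) ∨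
       (∀ y : Set ℕ, y.Infinite → y ⊆ K' → k + 1 ≤ nu bb (Fs y))) := by
  classical
  set e : ℕ → ℕ := fun n => ((hK.natEmbedding) n : ℕ) with he
  have heinj : Function.Injective e := fun a b hab => by
    have := (hK.natEmbedding).injective (Subtype.ext hab)
    exact this
  have heK : ∀ n, e n ∈ K := fun n => ((hK.natEmbedding) n).2
  set W : Set (ℕ → Bool) := (FB ∘ shift e) ⁻¹' (Dset B k) with hWdef
  set X : Set (Set ℕ) := {x | x.Infinite ∧ chi x ∈ W} with hXdef
  have h1 : ∀ x ∈ X, x.Infinite := fun x hx => hx.1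
  have chi_setOf : ∀ g : ℕ → Bool, chi {n | g n = true} = g := by
    intro g; funext n
    cases hgn : g n
    · simp [chi, hgn]
    · simp [chi, hgn]
  have h2 : chi '' X = InfB ∩ W := by
    ext g
    constructor
    · rintro ⟨x, ⟨hxinf, hxW⟩, rfl⟩
      refine ⟨?_, hxW⟩
      show {n | chi x n = true}.Infinite
      have hxx : {n | chi x n = true} = x := by
        ext n
        simp only [Set.mem_setOf_eq, chi]
        by_cases h : n ∈ x <;> simp [h]
      rw [hxx]; exact hxinf
    · rintro ⟨hg, hgW⟩
      exact ⟨{n | g n = true}, ⟨hg, by rw [chi_setOf]; exact hgW⟩, chi_setOf g⟩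
  have h3 : chi '' X ∈ Γ.mem (ℕ → Bool) := by
    rw [h2]
    exact mem_inter Γ (InfB_mem Γ)
      (Γ.preimage_mem _ ℝ _ _ (continuous_FB.comp (continuous_shift e)) (Dset_mem Γ hB k))
  obtain ⟨H, hHinf, hcases⟩ := hRamsey X h1 h3
  have himg_inf : (e '' H).Infinite := hHinf.image (Set.injOn_of_injective heinj)
  refine ⟨e '' H, ?_, himg_inf, ?_⟩
  · rintro m ⟨n, _, rfl⟩; exact heK n
  have key : ∀ y : Set ℕ, y.Infinite → y ⊆ e '' H →
      ((e ⁻¹' y) ∈ X ↔ Fs y ∈ Dset B k) ∧ (e ⁻¹' y).Infinite ∧ e ⁻¹' y ⊆ H := by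
    intro y hy hyH
    have hyr : y ⊆ Set.range e := hyH.trans (Set.image_subset_range e H)
    have him : e '' (e ⁻¹' y) = y := Set.image_preimage_eq_of_subset hyr
    have hpre_inf : (e ⁻¹' y).Infinite := by
      by_contra hfin
      rw [Set.not_infinite] at hfin
      have : y.Finite := him ▸ hfin.image e
      exact hy this
    have hsubH : e ⁻¹' y ⊆ H := by
      intro m hm
      obtain ⟨m', hm'H, hme⟩ := hyH hm
      rwa [← heinj hme]
    refine ⟨?_, hpre_inf, hsubH⟩
    simp only [hXdef, Set.mem_setOf_eq, hWdef, Set.mem_preimage, Function.comp_apply]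
    rw [← chi_image heinj, him, FB_chi]
    exact ⟨fun h => h.2, fun h => ⟨hpre_inf, h⟩⟩
  rcases hcases with hin | hout
  · left
    intro y hy hyK
    obtain ⟨hiff, hpinf, hpsub⟩ := key y hy hyK
    exact nu_le_of_mem_Dset bb hbb k _ (hiff.mp (hin _ hpinf hpsub))
  · right
    intro y hy hyK
    obtain ⟨hiff, hpinf, hpsub⟩ := key y hy hyK
    by_contra hcon
    push_neg at hcon
    exact hout _ hpinf hpsub (hiff.mpr (mem_Dset_of_nu bb hbb k _ (by omega)))

end
end NHB

namespace NHB
noncomputable section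

lemma no_injection_to_countable {β : Type*} [Countable β] (Φ : (ℕ → Bool) → β)
    (hinj : Function.Injective Φ) : False := by
  have : Countable (ℕ → Bool) := hinj.countable
  obtain ⟨f, hf⟩ := exists_surjective_nat (ℕ → Bool)
  obtain ⟨m, hm⟩ := hf (fun n => ! f n n)
  have h := congrFun hm m
  cases hfmm : f m m <;> rw [hfmm] at h <;> simp at h

lemma exists_disjoint_subfamily {α : Type*} [DecidableEq α] (f : ℕ → Finset α)
    (hfin : ∀ a : α, {i | a ∈ f i}.Finite) :
    ∃ g : ℕ → ℕ, Function.Injective g ∧ ∀ i j, i ≠ j → f (g i) ∩ f (g j) = ∅ := by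
  classical
  have step : ∀ p : ℕ × Finset α, ∃ j, p.1 < j ∧ ∀ b ∈ p.2, b ∉ f j := by
    intro p
    have hUf : {i | ∃ b ∈ p.2, b ∈ f i}.Finite := by
      have heq : {i | ∃ b ∈ p.2, b ∈ f i} = ⋃ b ∈ (p.2 : Set α), {i | b ∈ f i} := by
        ext i; simp
      rw [heq]
      exact Set.Finite.biUnion p.2.finite_toSet (fun b _ => hfin b)
    obtain ⟨M, hM⟩ := (hUf.union (Set.finite_Iic p.1)).bddAbove
    refine ⟨M + 1, ?_, ?_⟩
    · by_contra hc
      push_neg at hc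
      exact absurd (hM (Set.mem_union_right _ (by simp only [Set.mem_Iic]; omega))) (by omega)
    · intro b hb hbf
      exact absurd (hM (Set.mem_union_left _ ⟨b, hb, hbf⟩)) (by omega)
  choose nxt hnxt1 hnxt2 using step
  let F : ℕ → ℕ × Finset α := fun n =>
    Nat.rec (nxt (0, ∅), f (nxt (0, ∅))) (fun _ p => (nxt p, p.2 ∪ f (nxt p))) n
  have hFsucc : ∀ n, F (n+1) = (nxt (F n), (F n).2 ∪ f (nxt (F n))) := fun n => rfl
  have hsub : ∀ n, f ((F n).1) ⊆ (F n).2 := by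
    intro n
    cases n with
    | zero => exact subset_rfl
    | succ m => rw [hFsucc m]; exact Finset.subset_union_right
  have hchain : ∀ i j, i ≤ j → (F i).2 ⊆ (F j).2 := by
    intro i j hij
    induction j with
    | zero => rw [Nat.le_zero.mp hij]
    | succ m ihm =>
        rcases Nat.lt_or_ge i (m+1) with h | h
        · exact (ihm (by omega)).trans (by rw [hFsucc m]; exact Finset.subset_union_left)
        · rw [Nat.le_antisymm hij h]
  have hmono : StrictMono (fun n => (F n).1) := by
    apply strictMono_nat_of_lt_succ
    intro n
    rw [hFsucc n]
    exact hnxt1 (F n)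
  have havoid : ∀ m, ∀ b ∈ (F m).2, b ∉ f ((F (m+1)).1) := by
    intro m b hb
    rw [hFsucc m]
    exact hnxt2 (F m) b hb
  refine ⟨fun n => (F n).1, hmono.injective, ?_⟩
  have key : ∀ i j, i < j → f ((F i).1) ∩ f ((F j).1) = ∅ := by
    intro i j hij
    obtain ⟨m, rfl⟩ : ∃ m, j = m + 1 := ⟨j - 1, by omega⟩
    rw [Finset.eq_empty_iff_forall_notMem]
    intro b hb
    rw [Finset.mem_inter] at hb
    exact havoid m b (hchain i m (by omega) (hsub i hb.1)) hb.2
  intro i j hij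
  rcases Nat.lt_or_ge i j with h | h
  · exact key i j h
  · rw [Finset.inter_comm]
    exact key j i (by omega)

lemma delta_system {α : Type*} [DecidableEq α] : ∀ (k : ℕ) (f : ℕ → Finset α), (∀ i, (f i).card ≤ k) →
    ∃ g : ℕ → ℕ, Function.Injective g ∧ ∃ R : Finset α,
      ∀ i j, i ≠ j → f (g i) ∩ f (g j) = R := by
  classical
  intro k
  induction k with
  | zero =>
      intro f hf
      refine ⟨id, Function.injective_id, ∅, fun i j _ => ?_⟩
      have h1 : f i = ∅ := Finset.card_eq_zero.mp (Nat.le_zero.mp (hf i))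
      simp [h1]
  | succ k ih =>
      intro f hf
      by_cases hcase : ∃ a : α, {i | a ∈ f i}.Infinite
      · obtain ⟨a, ha⟩ := hcase
        set e : ℕ → ℕ := fun n => ((ha.natEmbedding) n : ℕ) with hedef
        have heinj : Function.Injective e := fun x y hxy => by
          have := (ha.natEmbedding).injective (Subtype.ext hxy)
          exact this
        have hemem : ∀ n, a ∈ f (e n) := fun n => ((Set.Infinite.natEmbedding _ ha) n).2
        have hf' : ∀ i, ((f (e i)).erase a).card ≤ k := by
          intro i
          rw [Finset.card_erase_of_mem (hemem i)]
          have := hf (e i); omega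
        obtain ⟨g, hg, R, hR⟩ := ih (fun i => (f (e i)).erase a) hf'
        refine ⟨e ∘ g, heinj.comp hg, insert a R, fun i j hij => ?_⟩
        have hRij := hR i j hij
        ext b
        simp only [Finset.mem_inter, Finset.mem_insert]
        constructor
        · rintro ⟨hb1, hb2⟩
          by_cases hba : b = a
          · exact Or.inl hba
          · right
            rw [← hRij]
            simp only [Finset.mem_inter, Finset.mem_erase]
            exact ⟨⟨hba, hb1⟩, ⟨hba, hb2⟩⟩
        · rintro (rfl | hbR)
          · exact ⟨hemem (g i), hemem (g j)⟩
          · rw [← hRij] at hbR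
            simp only [Finset.mem_inter, Finset.mem_erase] at hbR
            exact ⟨hbR.1.2, hbR.2.2⟩
      · push_neg at hcase
        obtain ⟨g, hg, hdisj⟩ := exists_disjoint_subfamily f hcase
        exact ⟨g, hg, ∅, hdisj⟩

lemma stabilize_signs {α : Type*} (R : Finset α) (v : ℕ → α → ℚ) :
    ∃ g : ℕ → ℕ, StrictMono g ∧ ∀ b ∈ R, ∀ i j : ℕ, (0 < v (g i) b ↔ 0 < v (g j) b) := by
  classical
  induction R using Finset.induction_on with
  | empty => exact ⟨id, strictMono_id, fun b hb => absurd hb (Finset.notMem_empty b)⟩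
  | @insert a s ha ih =>
      obtain ⟨g, hg, hgs⟩ := ih
      by_cases hc : {n | 0 < v (g n) a}.Infinite
      · refine ⟨g ∘ Nat.nth (fun n => 0 < v (g n) a), hg.comp (Nat.nth_strictMono hc), ?_⟩
        intro b hb i j
        rcases Finset.mem_insert.mp hb with rfl | hbs
        · simp only [Function.comp_apply]
          have h1 := Nat.nth_mem_of_infinite hc i
          have h2 := Nat.nth_mem_of_infinite hc j
          exact ⟨fun _ => h2, fun _ => h1⟩
        · exact hgs b hbs _ _
      · rw [Set.not_infinite] at hc
        have hc' : {n | ¬ 0 < v (g n) a}.Infinite := by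
          have h := hc.infinite_compl
          have heq : {n | ¬ 0 < v (g n) a} = {n | 0 < v (g n) a}ᶜ := by
            ext n; simp [Set.mem_compl_iff]
          rw [heq]; exact h
        refine ⟨g ∘ Nat.nth (fun n => ¬ 0 < v (g n) a), hg.comp (Nat.nth_strictMono hc'), ?_⟩
        intro b hb i j
        rcases Finset.mem_insert.mp hb with rfl | hbs
        · simp only [Function.comp_apply]
          have h1 := Nat.nth_mem_of_infinite hc' i
          have h2 := Nat.nth_mem_of_infinite hc' j
          exact ⟨fun h => absurd h h1, fun h => absurd h h2⟩
        · exact hgs b hbs _ _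

lemma exists_cube_injection {W : Set ℕ} (hW : W.Infinite) :
    ∃ A : (ℕ → Bool) → Set ℕ, (∀ g, (A g).Infinite ∧ A g ⊆ W) ∧ Function.Injective A := by
  classical
  set e : ℕ → ℕ := fun n => ((hW.natEmbedding) n : ℕ) with hedef
  have heinj : Function.Injective e := fun x y hxy => by
    have := (hW.natEmbedding).injective (Subtype.ext hxy)
    exact this
  set Af : (ℕ → Bool) → Set ℕ := fun g => Set.range (fun i => e (2*i + (if g i then 1 else 0)))
    with hAdef
  refine ⟨Af, fun g => ⟨?_, ?_⟩, ?_⟩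
  · apply Set.infinite_range_of_injective
    intro i j hij
    have h := heinj hij
    by_cases hgi : g i <;> by_cases hgj : g j <;> simp [hgi, hgj] at h <;> omega
  · rintro x ⟨i, rfl⟩
    exact ((Set.Infinite.natEmbedding _ hW) _).2
  · intro g h hgh
    funext i
    have h1 : e (2*i + (if g i then 1 else 0)) ∈ Af h := by
      rw [← hgh]; exact Set.mem_range_self i
    obtain ⟨j, hj⟩ := Set.mem_range.mp h1
    have h2 := heinj hj
    by_cases hgi : g i <;> by_cases hhj : h j <;> simp [hgi, hhj] at h2 <;>
      first
        | (have : i = j := by omega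
           subst this
           simp [hgi, hhj] at *
           try omega)
        | omega

end
end NHB

namespace NHB
noncomputable section

lemma Fs_biUnion {ι : Type*} [DecidableEq ι] (t : Finset ι) (z : ι → Set ℕ)
    (hdisj : ∀ i ∈ t, ∀ j ∈ t, i ≠ j → Disjoint (z i) (z j)) :
    Fs (⋃ i ∈ t, z i) = ∑ i ∈ t, Fs (z i) := by
  induction t using Finset.induction_on with
  | empty => simp [Fs]
  | @insert a s has ih =>
      rw [Finset.set_biUnion_insert, Finset.sum_insert has]
      have hd : Disjoint (z a) (⋃ i ∈ s, z i) := by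
        rw [Set.disjoint_iUnion_right]
        intro i
        rw [Set.disjoint_iUnion_right]
        intro hi
        exact hdisj a (Finset.mem_insert_self a s) i (Finset.mem_insert_of_mem hi)
          (fun h => has (h ▸ hi))
      rw [Fs_union hd, ih (fun i hi j hj hij =>
        hdisj i (Finset.mem_insert_of_mem hi) j (Finset.mem_insert_of_mem hj) hij)]

lemma repr_rat {B : Set ℝ} (bb : Module.Basis ↥B ℚ ℝ) (q : ℚ) :
    bb.repr ((q : ℝ)) = q • bb.repr 1 := by
  have h : ((q : ℚ) : ℝ) = q • (1 : ℝ) := by rw [Rat.smul_def, mul_one]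
  rw [h, map_smul]

lemma repr_insert {B : Set ℝ} (bb : Module.Basis ↥B ℚ ℝ) {y : Set ℕ} {n : ℕ} (hn : n ∉ y) :
    bb.repr (Fs (insert n y)) = bb.repr (Fs y) + (wq n) • bb.repr 1 := by
  rw [Fs_insert hn, ← wq_cast n, map_add, repr_rat]
  exact add_comm _ _

lemma countability_contradiction {B : Set ℝ} (bb : Module.Basis ↥B ℚ ℝ) {W : Set ℕ}
    (hW : W.Infinite) (T : Finset ↥B)
    (hT : ∀ y : Set ℕ, y.Infinite → y ⊆ W → (bb.repr (Fs y)).support ⊆ T) : False := by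
  classical
  obtain ⟨A, hA, hAinj⟩ := exists_cube_injection hW
  set Φ : (ℕ → Bool) → ({b // b ∈ T} → ℚ) := fun g b => bb.repr (Fs (A g)) b.val with hΦ
  refine no_injection_to_countable Φ ?_
  intro g h hgh
  apply hAinj
  apply Fs_inj (hA g).1 (hA h).1
  apply bb.repr.injective
  apply Finsupp.ext
  intro b
  by_cases hb : b ∈ T
  · exact congrFun hgh ⟨b, hb⟩
  · rw [Finsupp.notMem_support_iff.mp (fun hmem => hb (hT _ (hA g).1 (hA g).2 hmem)),
      Finsupp.notMem_support_iff.mp (fun hmem => hb (hT _ (hA h).1 (hA h).2 hmem))]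

end
end NHB

namespace NHB
noncomputable section

lemma lemmaA (Γ : GoodPointclass)
    (hRamsey : ∀ X : Set (Set ℕ), (∀ x ∈ X, x.Infinite) →
      chi '' X ∈ Γ.mem (ℕ → Bool) → RamseyProp X)
    {B : Set ℝ} (bb : Module.Basis ↥B ℚ ℝ) (hbb : ∀ i : ↥B, (bb i : ℝ) = i.val)
    (hB : B ∈ Γ.mem ℝ) :
    ¬ ∃ k, ∃ K : Set ℕ, K.Infinite ∧ ∀ y : Set ℕ, y.Infinite → y ⊆ K →
      nu bb (Fs y) ≤ k := by
  classical
  intro hex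
  have hspec := Nat.find_spec hex
  have hmin : ∀ m, m < Nat.find hex →
      ¬ ∃ K : Set ℕ, K.Infinite ∧ ∀ y : Set ℕ, y.Infinite → y ⊆ K → nu bb (Fs y) ≤ m :=
    fun m hm => Nat.find_min hex hm
  set k₀ := Nat.find hex with hk₀def
  obtain ⟨K, hKinf, hKbd⟩ := hspec
  rcases Nat.eq_zero_or_pos k₀ with hz | hpos
  · have h := hKbd K hKinf subset_rfl
    rw [hz] at h
    have h0 : bb.repr (Fs K) = 0 :=
      Finsupp.support_eq_empty.mp (Finset.card_eq_zero.mp (Nat.le_zero.mp h))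
    have hFK : Fs K = 0 := (LinearEquiv.map_eq_zero_iff bb.repr).mp h0
    exact absurd hFK (Fs_pos hKinf.nonempty).ne'
  obtain ⟨m, hm⟩ : ∃ m, k₀ = m + 1 := ⟨k₀ - 1, by omega⟩
  obtain ⟨K₁, hK₁sub, hK₁inf, hside⟩ := relRamsey Γ hRamsey bb hbb hB hKinf m
  have hν : ∀ y : Set ℕ, y.Infinite → y ⊆ K₁ → (bb.repr (Fs y)).support.card = k₀ := by
    rcases hside with hl | hr
    · exact absurd ⟨K₁, hK₁inf, hl⟩ (hmin m (by omega))
    · intro y hy hyK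
      have h1 := hr y hy hyK
      have h2 := hKbd y hy (hyK.trans hK₁sub)
      show (bb.repr (Fs y)).support.card = k₀
      have h1' : m + 1 ≤ nu bb (Fs y) := h1
      have h2' : nu bb (Fs y) ≤ k₀ := h2
      have : nu bb (Fs y) = (bb.repr (Fs y)).support.card := rfl
      omega
  -- split K₁ into K'' and a reservoir
  set eK : ℕ → ℕ := fun n => ((hK₁inf.natEmbedding) n : ℕ) with heKdef
  have heKinj : Function.Injective eK := fun x y hxy => by
    have := (hK₁inf.natEmbedding).injective (Subtype.ext hxy)
    exact this
  have heKmem : ∀ n, eK n ∈ K₁ := fun n => ((hK₁inf.natEmbedding) n).2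
  set K'' : Set ℕ := Set.range (fun m' => eK (2*m')) with hK''def
  have hK''sub : K'' ⊆ K₁ := by rintro x ⟨m', rfl⟩; exact heKmem _
  have hK''inf : K''.Infinite :=
    Set.infinite_range_of_injective (fun a b hab => by
      have := heKinj hab; omega)
  set u := bb.repr (1:ℝ) with hudef
  set S₀ := (bb.repr (1:ℝ)).support with hS₀def
  -- Step 1 : S₀ is contained in every support over K''
  have step1 : ∀ y : Set ℕ, y.Infinite → y ⊆ K'' → S₀ ⊆ (bb.repr (Fs y)).support := by
    intro y hy hyK
    have hres : ∀ j : ℕ, eK (2*j+1) ∉ y := by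
      intro j hmem
      obtain ⟨m', hm'⟩ := hyK hmem
      have h2 := heKinj hm'
      omega
    set cy := bb.repr (Fs y) with hcydef
    have hsubsing : ∀ b ∈ S₀ ∩ cy.support,
        Set.Subsingleton {j : ℕ | cy b + wq (eK (2*j+1)) * u b = 0} := by
      intro b hb j1 hj1 j2 hj2
      have hub : u b ≠ 0 := Finsupp.mem_support_iff.mp (Finset.mem_inter.mp hb).1
      simp only [Set.mem_setOf_eq] at hj1 hj2
      have hweq : wq (eK (2*j1+1)) = wq (eK (2*j2+1)) :=
        mul_right_cancel₀ hub (by linarith)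
      have h3 := heKinj (wq_injective hweq)
      omega
    have hbadfin : (⋃ b ∈ (S₀ ∩ cy.support : Finset ↥B),
        {j : ℕ | cy b + wq (eK (2*j+1)) * u b = 0}).Finite :=
      Set.Finite.biUnion (Finset.finite_toSet _)
        (fun b hb => Set.Subsingleton.finite (hsubsing b hb))
    obtain ⟨N, hN⟩ := hbadfin.bddAbove
    set n := eK (2*(N+1)+1) with hndef
    have hnin : n ∉ y := hres (N+1)
    have hgood : ∀ b ∈ S₀ ∩ cy.support, cy b + wq n * u b ≠ 0 := by
      intro b hb hzero
      have hmem : (N+1) ∈ ⋃ b ∈ (S₀ ∩ cy.support : Finset ↥B),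
          {j : ℕ | cy b + wq (eK (2*j+1)) * u b = 0} := by
        exact Set.mem_biUnion hb hzero
      exact absurd (hN hmem) (by omega)
    have hrepr : bb.repr (Fs (insert n y)) = cy + wq n • u := repr_insert bb hnin
    have hsupp : (bb.repr (Fs (insert n y))).support = cy.support ∪ S₀ := by
      rw [hrepr]
      apply Finset.Subset.antisymm
      · refine Finsupp.support_add.trans (Finset.union_subset_union subset_rfl ?_)
        exact Finsupp.support_smul
      · intro b hb
        rw [Finsupp.mem_support_iff, Finsupp.add_apply, Finsupp.smul_apply, smul_eq_mul]
        rcases Finset.mem_union.mp hb with hb1 | hb2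
        · by_cases hbS : b ∈ S₀
          · exact hgood b (Finset.mem_inter.mpr ⟨hbS, hb1⟩)
          · have hub : u b = 0 := Finsupp.notMem_support_iff.mp hbS
            rw [hub, mul_zero, add_zero]
            exact Finsupp.mem_support_iff.mp hb1
        · by_cases hby : b ∈ cy.support
          · exact hgood b (Finset.mem_inter.mpr ⟨hb2, hby⟩)
          · have hcyb : cy b = 0 := Finsupp.notMem_support_iff.mp hby
            rw [hcyb, zero_add]
            exact mul_ne_zero (wq_ne_zero _) (Finsupp.mem_support_iff.mp hb2)
    have hins_inf : (insert n y).Infinite := hy.mono (Set.subset_insert n y)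
    have hins_sub : insert n y ⊆ K₁ :=
      Set.insert_subset_iff.mpr ⟨heKmem _, hyK.trans hK''sub⟩
    have h1 : (cy.support ∪ S₀).card = k₀ := by
      rw [← hsupp]
      exact hν (insert n y) hins_inf hins_sub
    have h2 : cy.support.card = k₀ := hν y hy (hyK.trans hK''sub)
    have h3 : cy.support = cy.support ∪ S₀ :=
      Finset.eq_of_subset_of_card_le Finset.subset_union_left (le_of_eq (h1.trans h2.symm))
    intro b hb
    rw [h3]
    exact Finset.mem_union_right _ hb
  set k' := k₀ - S₀.card with hk'def
  have hs₀le : S₀.card ≤ k₀ := by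
    have h1 := step1 K'' hK''inf subset_rfl
    have h2 := hν K'' hK''inf hK''sub
    calc S₀.card ≤ (bb.repr (Fs K'')).support.card := Finset.card_le_card h1
      _ = k₀ := h2
  have hS'card : ∀ y : Set ℕ, y.Infinite → y ⊆ K'' →
      ((bb.repr (Fs y)).support \ S₀).card = k' := by
    intro y hy hyK
    rw [Finset.card_sdiff_of_subset (step1 y hy hyK), hν y hy (hyK.trans hK''sub)]
  by_cases hk' : k' = 0
  · -- all supports inside S₀ : countability contradiction
    refine countability_contradiction bb hK''inf S₀ ?_
    intro y hy hyK
    have h := hS'card y hy hyK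
    rw [hk'] at h
    have h2 : (bb.repr (Fs y)).support \ S₀ = ∅ := Finset.card_eq_zero.mp h
    intro b hb
    by_contra hbS
    exact absurd h2 (Finset.ne_empty_of_mem (Finset.mem_sdiff.mpr ⟨hb, hbS⟩))
  -- blocks
  set z : ℕ → Set ℕ := fun i => Set.range (fun m' => eK (2 * Nat.pair i m')) with hzdef
  have hzsub : ∀ i, z i ⊆ K'' := by
    rintro i x ⟨m', rfl⟩
    exact ⟨Nat.pair i m', rfl⟩
  have hzinf : ∀ i, (z i).Infinite := by
    intro i
    apply Set.infinite_range_of_injective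
    intro a b hab
    have h := heKinj hab
    have := Nat.pair_eq_pair.mp (by omega : Nat.pair i a = Nat.pair i b)
    exact this.2
  have hzdisj : ∀ i j, i ≠ j → Disjoint (z i) (z j) := by
    intro i j hij
    rw [Set.disjoint_left]
    rintro x ⟨a, rfl⟩ ⟨b, hb⟩
    have h := heKinj hb
    have := Nat.pair_eq_pair.mp (by omega : Nat.pair j b = Nat.pair i a)
    exact hij this.1.symm
  set f : ℕ → Finset ↥B := fun i => (bb.repr (Fs (z i))).support \ S₀ with hfdef
  have hfcard : ∀ i, (f i).card = k' := fun i => hS'card (z i) (hzinf i) (hzsub i)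
  obtain ⟨g, hginj, R, hgR⟩ := delta_system k' f (fun i => (hfcard i).le)
  -- petal death
  have hsuppz : ∀ i, (bb.repr (Fs (z i))).support = f i ∪ S₀ :=
    fun i => (Finset.sdiff_union_of_subset (step1 _ (hzinf i) (hzsub i))).symm
  have hpetal : {i : ℕ | ¬ (f (g i) ⊆ R)}.Finite := by
    by_contra hinf0
    replace hinf0 : {i : ℕ | ¬ (f (g i) ⊆ R)}.Infinite := hinf0
    set pe : ℕ → ℕ := fun n => ((hinf0.natEmbedding) n : ℕ) with hpedef
    have hpeinj : Function.Injective pe := fun x y hxy => by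
      have := (hinf0.natEmbedding).injective (Subtype.ext hxy)
      exact this
    have hpebad : ∀ n, ¬ (f (g (pe n)) ⊆ R) := fun n => ((hinf0.natEmbedding) n).2
    set Y : Set ℕ := ⋃ j ∈ Finset.range (k'+1), z (g (pe j)) with hYdef
    have hY0 : z (g (pe 0)) ⊆ Y := fun x hx =>
      Set.mem_biUnion (Finset.mem_range.mpr (by omega)) hx
    have hYinf : Y.Infinite := (hzinf _).mono hY0
    have hYsub : Y ⊆ K'' := by
      intro x hx
      obtain ⟨j, _, hxj⟩ := Set.mem_iUnion₂.mp hx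
      exact hzsub _ hxj
    have hrepr : bb.repr (Fs Y) =
        ∑ j ∈ Finset.range (k'+1), bb.repr (Fs (z (g (pe j)))) := by
      rw [show Y = ⋃ j ∈ Finset.range (k'+1), z (g (pe j)) from rfl]
      rw [Fs_biUnion _ _ (fun i _ j _ hij => hzdisj _ _ (fun h => hij (hpeinj (hginj h)))),
        map_sum]
    have hbex : ∀ j : ℕ, ∃ b, b ∈ f (g (pe j)) ∧ b ∉ R := by
      intro j
      by_contra hc
      push_neg at hc
      exact hpebad j (fun b hb => hc b hb)
    choose bj hbj1 hbj2 using hbex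
    have hbjnS₀ : ∀ j, bj j ∉ S₀ := fun j => (Finset.mem_sdiff.mp (hbj1 j)).2
    have hval : ∀ j ∈ Finset.range (k'+1), (bb.repr (Fs Y)) (bj j) ≠ 0 := by
      intro j hj
      rw [hrepr, Finset.sum_apply']
      rw [Finset.sum_eq_single j]
      · exact Finsupp.mem_support_iff.mp (Finset.mem_sdiff.mp (hbj1 j)).1
      · intro j' hj' hne
        apply Finsupp.notMem_support_iff.mp
        rw [hsuppz]
        intro hmem
        rcases Finset.mem_union.mp hmem with h1 | h1
        · have hne2 : g (pe j) ≠ g (pe j') := fun h => hne (hpeinj (hginj h)).symm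
          have : bj j ∈ f (g (pe j)) ∩ f (g (pe j')) :=
            Finset.mem_inter.mpr ⟨hbj1 j, h1⟩
          rw [hgR _ _ (fun h => hne2 (congrArg g h))] at this
          exact hbj2 j this
        · exact hbjnS₀ j h1
      · intro habs
        exact absurd hj habs
    have hbjmem : ∀ j ∈ Finset.range (k'+1), bj j ∈ (bb.repr (Fs Y)).support \ S₀ := by
      intro j hj
      exact Finset.mem_sdiff.mpr ⟨Finsupp.mem_support_iff.mpr (hval j hj), hbjnS₀ j⟩
    have hbjinj : Set.InjOn bj (Finset.range (k'+1)) := by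
      intro j1 h1 j2 h2 heq
      by_contra hne
      have hne2 : g (pe j1) ≠ g (pe j2) := fun h => hne (hpeinj (hginj h))
      have hmem : bj j1 ∈ f (g (pe j1)) ∩ f (g (pe j2)) :=
        Finset.mem_inter.mpr ⟨hbj1 j1, heq ▸ hbj1 j2⟩
      rw [hgR _ _ (fun h => hne2 (congrArg g h))] at hmem
      exact hbj2 j1 hmem
    have hcount := Finset.card_le_card_of_injOn bj (fun j hj => hbjmem j hj) hbjinj
    rw [hS'card Y hYinf hYsub, Finset.card_range] at hcount
    omega
  have hgoodinf : {i : ℕ | f (g i) ⊆ R}.Infinite := by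
    have h := hpetal.infinite_compl
    have heq : {i : ℕ | ¬ (f (g i) ⊆ R)}ᶜ = {i : ℕ | f (g i) ⊆ R} := by
      ext i; simp [Set.mem_compl_iff]
    rwa [heq] at h
  set gi : ℕ → ℕ := Nat.nth (fun i => f (g i) ⊆ R) with hgidef
  have hgimono : StrictMono gi := Nat.nth_strictMono hgoodinf
  have hfR : ∀ n, f (g (gi n)) = R := by
    intro n
    refine Finset.Subset.antisymm (Nat.nth_mem_of_infinite hgoodinf n) ?_
    have h := hgR (gi n) (gi n + 1) (by omega)
    rw [← h]
    exact Finset.inter_subset_left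
  have hcardR : R.card = k' := by rw [← hfR 0, hfcard]
  -- sign stabilization
  obtain ⟨σ, hσmono, hσsign⟩ := stabilize_signs R (fun n b => bb.repr (Fs (z (g (gi n)))) b)
  set ZZ : ℕ → Set ℕ := fun n => z (g (gi (σ n))) with hZZdef
  have hZZinj : Function.Injective (fun n => g (gi (σ n))) :=
    hginj.comp (hgimono.injective.comp hσmono.injective)
  have hZZdisj : ∀ i j, i ≠ j → Disjoint (ZZ i) (ZZ j) := fun i j hij =>
    hzdisj _ _ (fun h => hij (hZZinj h))
  have hZZsub : ∀ i, ZZ i ⊆ K'' := fun i => hzsub _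
  have hZZinf : ∀ i, (ZZ i).Infinite := fun i => hzinf _
  have hZZsupp : ∀ n, (bb.repr (Fs (ZZ n))).support \ S₀ = R := fun n => hfR (σ n)
  have hZZsign : ∀ b ∈ R, ∀ i j : ℕ,
      (0 < bb.repr (Fs (ZZ i)) b ↔ 0 < bb.repr (Fs (ZZ j)) b) := fun b hb i j =>
    hσsign b hb i j
  -- even part
  set w' : Set ℕ := ⋃ i, ZZ (2*i) with hw'def
  have hw'inf : w'.Infinite := (hZZinf 0).mono (Set.subset_iUnion (fun i => ZZ (2*i)) 0)
  have hw'sub : w' ⊆ K'' := Set.iUnion_subset (fun i => hZZsub _)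
  -- final claim
  have final : ∀ y : Set ℕ, y.Infinite → y ⊆ w' →
      (bb.repr (Fs y)).support ⊆ R ∪ S₀ := by
    intro y hy hyw
    set cy := bb.repr (Fs y) with hcydef
    set vv : ℕ → (↥B →₀ ℚ) := fun j => bb.repr (Fs (ZZ (2*j+1))) with hvvdef
    set sm : ℕ → (↥B →₀ ℚ) := fun mm => ∑ j ∈ Finset.range mm, vv j with hsmdef
    have hsuppvv : ∀ j, (vv j).support = R ∪ S₀ := by
      intro j
      calc (vv j).support
          = ((vv j).support \ S₀) ∪ S₀ :=
            (Finset.sdiff_union_of_subset (step1 _ (hZZinf _) (hZZsub _))).symm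
        _ = R ∪ S₀ := by rw [show (vv j).support \ S₀ = R from hZZsupp (2*j+1)]
    have hydisj : ∀ j, Disjoint y (ZZ (2*j+1)) := by
      intro j
      rw [Set.disjoint_left]
      intro a hay haz
      obtain ⟨i, hi⟩ := Set.mem_iUnion.mp (hyw hay)
      exact Set.disjoint_left.mp (hZZdisj (2*i) (2*j+1) (by omega)) hi haz
    have hYm : ∀ mm : ℕ,
        bb.repr (Fs (y ∪ ⋃ j ∈ Finset.range mm, ZZ (2*j+1))) = cy + sm mm := by
      intro mm
      have hd1 : Disjoint y (⋃ j ∈ Finset.range mm, ZZ (2*j+1)) := by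
        rw [Set.disjoint_iUnion_right]
        intro j
        rw [Set.disjoint_iUnion_right]
        intro _
        exact hydisj j
      rw [Fs_union hd1, map_add,
        Fs_biUnion _ _ (fun i _ j _ hij => hZZdisj _ _ (by omega)), map_sum]
    have hYminf : ∀ mm : ℕ, (y ∪ ⋃ j ∈ Finset.range mm, ZZ (2*j+1)).Infinite :=
      fun mm => hy.mono Set.subset_union_left
    have hYmsub : ∀ mm : ℕ, (y ∪ ⋃ j ∈ Finset.range mm, ZZ (2*j+1)) ⊆ K'' :=
      fun mm => Set.union_subset (hyw.trans hw'sub)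
        (Set.iUnion₂_subset (fun j _ => hZZsub _))
    have hsmb_apply : ∀ mm b, sm mm b = ∑ j ∈ Finset.range mm, vv j b := by
      intro mm b
      rw [show sm mm = ∑ j ∈ Finset.range mm, vv j from rfl]
      exact Finset.sum_apply' b
    have hsign : ∀ b ∈ R, ∀ j : ℕ, vv j b ≠ 0 := by
      intro b hb j
      apply Finsupp.mem_support_iff.mp
      rw [hsuppvv]
      exact Finset.mem_union_left _ hb
    have hmono2 : ∀ b ∈ R, ∀ m1 m2 : ℕ, m1 < m2 → sm m1 b ≠ sm m2 b := by
      intro b hb m1 m2 h12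
      have hdiffsum : sm m1 b + ∑ j ∈ Finset.Ico m1 m2, vv j b = sm m2 b := by
        rw [hsmb_apply, hsmb_apply, Finset.range_eq_Ico, Finset.range_eq_Ico]
        exact Finset.sum_Ico_consecutive (fun j => vv j b) (Nat.zero_le m1) h12.le
      by_cases hp : 0 < vv 0 b
      · have hpos : ∀ j : ℕ, 0 < vv j b := fun j =>
          (hZZsign b hb (2*j+1) (2*0+1)).mpr hp
        have hsumpos : 0 < ∑ j ∈ Finset.Ico m1 m2, vv j b :=
          Finset.sum_pos (fun j _ => hpos j) (Finset.nonempty_Ico.mpr h12)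
        intro heq
        rw [heq] at hdiffsum
        linarith
      · have hneg : ∀ j : ℕ, vv j b < 0 := by
          intro j
          have h1 : ¬ 0 < vv j b := fun hlt => hp ((hZZsign b hb (2*0+1) (2*j+1)).mpr hlt)
          exact lt_of_le_of_ne (not_lt.mp h1) (hsign b hb j)
        have hsumneg : ∑ j ∈ Finset.Ico m1 m2, vv j b < 0 :=
          Finset.sum_neg (fun j _ => hneg j) (Finset.nonempty_Ico.mpr h12)
        intro heq
        rw [heq] at hdiffsum
        linarith
    have hbadcard : ∀ b ∈ R,
        ((Finset.range (k'+1)).filter (fun mm => cy b + sm mm b = 0)).card ≤ 1 := by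
      intro b hb
      rw [Finset.card_le_one]
      intro m1 h1 m2 h2
      by_contra hne
      have e1 := (Finset.mem_filter.mp h1).2
      have e2 := (Finset.mem_filter.mp h2).2
      have heq : sm m1 b = sm m2 b := by linarith
      rcases Nat.lt_or_ge m1 m2 with h | h
      · exact hmono2 b hb m1 m2 h heq
      · exact hmono2 b hb m2 m1 (by omega) heq.symm
    have hex_good : ∃ mm ∈ Finset.range (k'+1), ∀ b ∈ R, cy b + sm mm b ≠ 0 := by
      by_contra hc
      push_neg at hc
      have hsub2 : Finset.range (k'+1) ⊆
          R.biUnion (fun b => (Finset.range (k'+1)).filter (fun mm => cy b + sm mm b = 0)) := by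
        intro mm hmm
        obtain ⟨b, hbR, hb0⟩ := hc mm hmm
        exact Finset.mem_biUnion.mpr ⟨b, hbR, Finset.mem_filter.mpr ⟨hmm, hb0⟩⟩
      have hcard2 := (Finset.card_le_card hsub2).trans (Finset.card_biUnion_le)
      have hcard3 : ∑ b ∈ R, ((Finset.range (k'+1)).filter
          (fun mm => cy b + sm mm b = 0)).card ≤ ∑ _b ∈ R, 1 :=
        Finset.sum_le_sum (fun b hb => hbadcard b hb)
      rw [Finset.sum_const, smul_eq_mul, mul_one, hcardR] at hcard3
      rw [Finset.card_range] at hcard2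
      omega
    obtain ⟨mm, hmmrange, hmmgood⟩ := hex_good
    have hYYrepr := hYm mm
    have hYYcard : ((bb.repr (Fs (y ∪ ⋃ j ∈ Finset.range mm, ZZ (2*j+1)))).support \ S₀).card
        = k' := hS'card _ (hYminf mm) (hYmsub mm)
    have hRS₀ : ∀ b' ∈ R, b' ∉ S₀ := by
      intro b' hb'
      rw [← hZZsupp 1] at hb'
      exact (Finset.mem_sdiff.mp hb').2
    have hR1 : R ⊆ (bb.repr (Fs (y ∪ ⋃ j ∈ Finset.range mm, ZZ (2*j+1)))).support \ S₀ := by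
      intro b' hb'
      refine Finset.mem_sdiff.mpr ⟨?_, hRS₀ b' hb'⟩
      rw [hYYrepr]
      rw [Finsupp.mem_support_iff, Finsupp.add_apply]
      exact hmmgood b' hb'
    intro b hb
    by_contra hbout
    have hbnR : b ∉ R := fun h => hbout (Finset.mem_union_left _ h)
    have hbnS₀ : b ∉ S₀ := fun h => hbout (Finset.mem_union_right _ h)
    have hsmzero : sm mm b = 0 := by
      apply Finsupp.notMem_support_iff.mp
      intro hmem
      have hsupp_sm : (sm mm).support ⊆ R ∪ S₀ := by
        refine (Finsupp.support_finset_sum).trans ?_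
        intro b' hb'
        obtain ⟨j, _, hjb⟩ := Finset.mem_biUnion.mp hb'
        rwa [hsuppvv j] at hjb
      exact hbout (hsupp_sm hmem)
    have hb2 : b ∈ (bb.repr (Fs (y ∪ ⋃ j ∈ Finset.range mm, ZZ (2*j+1)))).support \ S₀ := by
      refine Finset.mem_sdiff.mpr ⟨?_, hbnS₀⟩
      rw [hYYrepr, Finsupp.mem_support_iff, Finsupp.add_apply, hsmzero, add_zero]
      exact Finsupp.mem_support_iff.mp hb
    have hins : insert b R ⊆
        (bb.repr (Fs (y ∪ ⋃ j ∈ Finset.range mm, ZZ (2*j+1)))).support \ S₀ :=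
      Finset.insert_subset hb2 hR1
    have hcard4 := Finset.card_le_card hins
    rw [Finset.card_insert_of_notMem hbnR, hcardR, hYYcard] at hcard4
    omega
  exact countability_contradiction bb hw'inf (R ∪ S₀) final

end
end NHB

open NHB

theorem no_hamel_basis_in_ramsey_pointclass (Γ : GoodPointclass)
    (hRamsey : ∀ X : Set (Set ℕ), (∀ x ∈ X, x.Infinite) →
      chi '' X ∈ Γ.mem (ℕ → Bool) → RamseyProp X) :
    ∀ B : Set ℝ, IsHamelBasis B → B ∉ Γ.mem ℝ := by
  intro B hHB hBmem
  classical
  have hsp : ⊤ ≤ Submodule.span ℚ (Set.range ((↑) : ↥B → ℝ)) := by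
    rw [Subtype.range_coe]
    exact hHB.2.ge
  set bb : Module.Basis ↥B ℚ ℝ := Module.Basis.mk hHB.1 hsp with hbbdef
  have hbb : ∀ i : ↥B, bb i = i.val := fun i => Module.Basis.mk_apply hHB.1 hsp i
  have hA := lemmaA Γ hRamsey bb hbb hBmem
  have step : ∀ K : Set ℕ, K.Infinite → ∀ j : ℕ, ∃ K', K' ⊆ K ∧ K'.Infinite ∧
      ∀ y : Set ℕ, y.Infinite → y ⊆ K' → j + 1 ≤ nu bb (Fs y) := by
    intro K hK j
    obtain ⟨K', h1, h2, h3 | h3⟩ := relRamsey Γ hRamsey bb hbb hBmem hK j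
    · exact absurd ⟨j, K', h2, h3⟩ hA
    · exact ⟨K', h1, h2, h3⟩
  choose! nxt hnxt1 hnxt2 hnxt3 using step
  set Kseq : ℕ → Set ℕ :=
    fun j => Nat.rec (nxt Set.univ 0) (fun mm K => nxt K (mm+1)) j with hKseqdef
  have hKsucc : ∀ mm, Kseq (mm+1) = nxt (Kseq mm) (mm+1) := fun mm => rfl
  have hKinf : ∀ j, (Kseq j).Infinite := by
    intro j
    induction j with
    | zero => exact hnxt2 Set.univ Set.infinite_univ 0
    | succ mm ih => rw [hKsucc mm]; exact hnxt2 _ ih (mm+1)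
  have hKstep : ∀ mm, Kseq (mm+1) ⊆ Kseq mm := by
    intro mm
    rw [hKsucc mm]
    exact hnxt1 _ (hKinf mm) (mm+1)
  have hKchain : ∀ i j, j ≤ i → Kseq i ⊆ Kseq j := by
    intro i
    induction i with
    | zero =>
        intro j hji
        rw [Nat.le_zero.mp hji]
    | succ mm ih =>
        intro j hji
        rcases Nat.lt_or_ge j (mm+1) with h | h
        · exact (hKstep mm).trans (ih j (by omega))
        · rw [Nat.le_antisymm hji h]
  have hKnu : ∀ j, ∀ y : Set ℕ, y.Infinite → y ⊆ Kseq j → j + 1 ≤ nu bb (Fs y) := by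
    intro j
    cases j with
    | zero => exact hnxt3 Set.univ Set.infinite_univ 0
    | succ mm =>
        intro y hy hysub
        rw [hKsucc mm] at hysub
        exact hnxt3 _ (hKinf mm) (mm+1) y hy hysub
  have hpick : ∀ j x : ℕ, ∃ mmm, mmm ∈ Kseq j ∧ x < mmm := by
    intro j x
    obtain ⟨b, hb, hx⟩ := (hKinf j).exists_gt x
    exact ⟨b, hb, hx⟩
  choose pick hpick1 hpick2 using hpick
  set nseq : ℕ → ℕ :=
    fun j => Nat.rec (pick 0 0) (fun mm prev => pick (mm+1) prev) j with hnseqdef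
  have hnsucc : ∀ mm, nseq (mm+1) = pick (mm+1) (nseq mm) := fun mm => rfl
  have hnmem : ∀ j, nseq j ∈ Kseq j := by
    intro j
    cases j with
    | zero => exact hpick1 0 0
    | succ mm =>
        rw [hnsucc mm]
        exact hpick1 (mm+1) (nseq mm)
  have hnmono : StrictMono nseq := strictMono_nat_of_lt_succ (fun mm => by
    rw [hnsucc mm]
    exact hpick2 (mm+1) (nseq mm))
  have hyinf : (Set.range nseq).Infinite := Set.infinite_range_of_injective hnmono.injective
  set S₀ := (bb.repr (1:ℝ)).support with hS₀def
  have htail : ∀ j : ℕ, (nseq '' Set.Ici j).Infinite ∧ nseq '' Set.Ici j ⊆ Kseq j := by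
    intro j
    constructor
    · exact (Set.Ici_infinite j).image (Set.injOn_of_injective hnmono.injective)
    · rintro x ⟨i, hi, rfl⟩
      exact hKchain i j hi (hnmem i)
  have hsplit : ∀ j : ℕ, Set.range nseq = (nseq '' Set.Iio j) ∪ (nseq '' Set.Ici j) := by
    intro j
    rw [← Set.image_union, Set.Iio_union_Ici, Set.image_univ]
  have hdisj : ∀ j : ℕ, Disjoint (nseq '' Set.Iio j) (nseq '' Set.Ici j) := by
    intro j
    apply Set.disjoint_image_of_injective hnmono.injective
    rw [Set.disjoint_left]
    intro a ha ha2
    rw [Set.mem_Iio] at ha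
    rw [Set.mem_Ici] at ha2
    omega
  have hkey : ∀ j : ℕ, j + 1 ≤ nu bb (Fs (Set.range nseq)) + S₀.card := by
    intro j
    obtain ⟨q, hq⟩ := Fs_finite_rat ((Set.finite_Iio j).image nseq)
    have h1 : Fs (Set.range nseq) = Fs (nseq '' Set.Iio j) + Fs (nseq '' Set.Ici j) := by
      conv_lhs => rw [hsplit j]
      exact Fs_union (hdisj j)
    have h2 : bb.repr (Fs (nseq '' Set.Ici j)) =
        bb.repr (Fs (Set.range nseq)) - q • bb.repr 1 := by
      have heq : Fs (nseq '' Set.Ici j) = Fs (Set.range nseq) - (q:ℝ) := by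
        rw [h1, hq]; ring
      rw [heq, map_sub, repr_rat]
    have h3 : j + 1 ≤ (bb.repr (Fs (nseq '' Set.Ici j))).support.card :=
      hKnu j _ (htail j).1 (htail j).2
    have h4 : (bb.repr (Fs (nseq '' Set.Ici j))).support.card ≤
        (bb.repr (Fs (Set.range nseq))).support.card + S₀.card := by
      rw [h2]
      refine (Finset.card_le_card Finsupp.support_sub).trans ?_
      refine (Finset.card_union_le _ _).trans ?_
      have h5 : ((q • bb.repr (1:ℝ)).support).card ≤ S₀.card :=
        Finset.card_le_card Finsupp.support_smul
      omega
    have h6 : nu bb (Fs (Set.range nseq)) = (bb.repr (Fs (Set.range nseq))).support.card := rfl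
    omega
  have hfin := hkey (nu bb (Fs (Set.range nseq)) + S₀.card)
  omega
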